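/- arXiv:1701.05845 — 4 statements merged into one kernel-verified Lean document; each statement's English description precedes it below -/
import Mathlib

section
/- For maps f : A → X and g : B → Y between path-connected spaces (with X, Y normal), the sectional category of the product map satisfies secat(f × g) ≤ secat(f) + secat(g). -/
open unitInterval Set ContinuousMap

/-- `f` admits an open cover of its target by `n+1` open sets, on each of which the
inclusion factors through `f` up to homotopy (local homotopy sections). -/
def CoveredBySections {A X : Type*} [TopologicalSpace A] [TopologicalSpace X]
    (f : C(A, X)) (n : ℕ) : Prop :=
  ∃ U : Fin (n + 1) → Set X, (∀ i, IsOpen (U i)) ∧ (⋃ i, U i) = Set.univ ∧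
    ∀ i, ∃ s : C(U i, A),
      (f.comp s).Homotopic ⟨Subtype.val, continuous_subtype_val⟩

/-- The (reduced) sectional category of a map, as an extended natural number. -/
noncomputable def secat {A X : Type*} [TopologicalSpace A] [TopologicalSpace X]
    (f : C(A, X)) : ℕ∞ :=
  sInf ((fun n : ℕ => (n : ℕ∞)) '' {n : ℕ | CoveredBySections f n})


/-- Restriction of a homotopy section to a smaller subset. -/
lemma piece_section {A X B Y : Type}
    [TopologicalSpace A] [TopologicalSpace X] [TopologicalSpace B] [TopologicalSpace Y]
    (f : C(A, X)) (g : C(B, Y)) {U : Set X} {V : Set Y}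
    (hU : ∃ s : C(U, A), (f.comp s).Homotopic ⟨Subtype.val, continuous_subtype_val⟩)
    (hV : ∃ s : C(V, B), (g.comp s).Homotopic ⟨Subtype.val, continuous_subtype_val⟩)
    {W : Set (X × Y)} (hW : W ⊆ U ×ˢ V) :
    ∃ s : C(W, A × B),
      ((f.prodMap g).comp s).Homotopic ⟨Subtype.val, continuous_subtype_val⟩ := by
  obtain ⟨sU, ⟨HU⟩⟩ := hU
  obtain ⟨sV, ⟨HV⟩⟩ := hV
  have h1 : Continuous fun w : W => (⟨(w : X × Y).1, (hW w.2).1⟩ : U) :=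
    Continuous.subtype_mk (continuous_fst.comp continuous_subtype_val) _
  have h2 : Continuous fun w : W => (⟨(w : X × Y).2, (hW w.2).2⟩ : V) :=
    Continuous.subtype_mk (continuous_snd.comp continuous_subtype_val) _
  set e1 : C(W, U) := ⟨_, h1⟩
  set e2 : C(W, V) := ⟨_, h2⟩
  refine ⟨(sU.comp e1).prodMk (sV.comp e2), ?_⟩
  have K1 : ((f.comp sU).comp e1).Homotopic
      (ContinuousMap.comp ⟨Subtype.val, continuous_subtype_val⟩ e1) :=
    ⟨HU.comp (ContinuousMap.Homotopy.refl e1)⟩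
  have K2 : ((g.comp sV).comp e2).Homotopic
      (ContinuousMap.comp ⟨Subtype.val, continuous_subtype_val⟩ e2) :=
    ⟨HV.comp (ContinuousMap.Homotopy.refl e2)⟩
  obtain ⟨K1⟩ := K1
  obtain ⟨K2⟩ := K2
  refine ⟨?_⟩
  have := K1.prod K2
  convert this using 2 <;> rfl


lemma glue_sections {E T : Type} [TopologicalSpace E] [TopologicalSpace T]
    (h : C(E, T)) {ι : Type} (W : ι → Set T) (hWo : ∀ k, IsOpen (W k))
    (hdisj : ∀ k l, k ≠ l → Disjoint (W k) (W l))
    (hsec : ∀ k, ∃ s : C(W k, E),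
      (h.comp s).Homotopic ⟨Subtype.val, continuous_subtype_val⟩) :
    ∃ s : C(↥(⋃ k, W k), E),
      (h.comp s).Homotopic ⟨Subtype.val, continuous_subtype_val⟩ := by
  choose s hs using hsec
  have H := fun k => (hs k).some
  set Z : Set T := ⋃ k, W k with hZ
  set S : ι → Set ↥Z := fun k => Subtype.val ⁻¹' W k with hSdef
  have hSo : ∀ k, IsOpen (S k) := fun k => (hWo k).preimage continuous_subtype_val
  have hScov : ∀ z : ↥Z, ∃ k, z ∈ S k := fun z => (mem_iUnion.1 z.2).imp fun k hk => hk
  have hSnhds : ∀ z : ↥Z, ∃ k, S k ∈ nhds z := fun z => by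
    obtain ⟨k, hk⟩ := hScov z
    exact ⟨k, (hSo k).mem_nhds hk⟩
  -- the glued section
  set φ : ∀ k, C(S k, E) := fun k =>
    (s k).comp ⟨fun z => ⟨(z : ↥Z).1, z.2⟩,
      Continuous.subtype_mk (continuous_subtype_val.comp continuous_subtype_val) _⟩ with hφdef
  have hφ : ∀ (i j) (x : ↥Z) (hxi : x ∈ S i) (hxj : x ∈ S j),
      φ i ⟨x, hxi⟩ = φ j ⟨x, hxj⟩ := by
    intro i j x hxi hxj
    rcases eq_or_ne i j with rfl | hne
    · rfl
    · exact absurd (Set.disjoint_left.1 (hdisj i j hne) hxi hxj) (fun h => h)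
  set sg : C(↥Z, E) := ContinuousMap.liftCover S φ hφ hSnhds with hsigdef
  refine ⟨sg, ?_⟩
  -- glue the homotopies
  set S' : ι → Set (↑I × ↥Z) := fun k => Prod.snd ⁻¹' S k with hS'def
  set ψ : ∀ k, C(S' k, T) := fun k =>
    (H k).toContinuousMap.comp
      ⟨fun q => ((q : ↑I × ↥Z).1, ⟨(q : ↑I × ↥Z).2.1, q.2⟩),
        Continuous.prodMk (continuous_fst.comp continuous_subtype_val)
          (Continuous.subtype_mk
            ((continuous_subtype_val.comp continuous_snd).comp continuous_subtype_val) _)⟩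
    with hψdef
  have hψc : ∀ (i j) (x : ↑I × ↥Z) (hxi : x ∈ S' i) (hxj : x ∈ S' j),
      ψ i ⟨x, hxi⟩ = ψ j ⟨x, hxj⟩ := by
    intro i j x hxi hxj
    rcases eq_or_ne i j with rfl | hne
    · rfl
    · exact absurd (Set.disjoint_left.1 (hdisj i j hne) hxi hxj) (fun h => h)
  have hS'nhds : ∀ q : ↑I × ↥Z, ∃ k, S' k ∈ nhds q := fun q => by
    obtain ⟨k, hk⟩ := hScov q.2
    exact ⟨k, ((hSo k).preimage continuous_snd).mem_nhds hk⟩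
  refine ⟨⟨⟨ContinuousMap.liftCover S' ψ hψc hS'nhds, ?_⟩, ?_, ?_⟩⟩
  · exact (ContinuousMap.liftCover S' ψ hψc hS'nhds).continuous
  · intro z
    obtain ⟨k, hk⟩ := hScov z
    have h0 : ((0 : ↑I), z) ∈ S' k := hk
    have e1 : ContinuousMap.liftCover S' ψ hψc hS'nhds ((⟨((0 : ↑I), z), h0⟩ : S' k) : ↑I × ↥Z)
        = ψ k ⟨((0 : ↑I), z), h0⟩ := ContinuousMap.liftCover_coe _
    have e2 : sg ((⟨z, hk⟩ : S k) : ↥Z) = φ k ⟨z, hk⟩ := ContinuousMap.liftCover_coe _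
    simp only [hψdef] at e1
    dsimp at e1 ⊢
    rw [e1]
    have := (H k).apply_zero ⟨z.1, hk⟩
    dsimp at this
    rw [this]
    dsimp [hφdef] at e2
    rw [e2]
    rfl
  · intro z
    obtain ⟨k, hk⟩ := hScov z
    have h0 : ((1 : ↑I), z) ∈ S' k := hk
    have e1 : ContinuousMap.liftCover S' ψ hψc hS'nhds ((⟨((1 : ↑I), z), h0⟩ : S' k) : ↑I × ↥Z)
        = ψ k ⟨((1 : ↑I), z), h0⟩ := ContinuousMap.liftCover_coe _
    dsimp at e1 ⊢
    rw [e1]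
    exact (H k).apply_one ⟨z.1, hk⟩

lemma prep {A X : Type} [TopologicalSpace A] [TopologicalSpace X] [NormalSpace X]
    {f : C(A, X)} {n : ℕ} (hf : CoveredBySections f n) :
    ∃ (U : Fin (n+1) → Set X) (φ : Fin (n+1) → C(X, ℝ)),
      (∀ i, ∃ s : C(U i, A), (f.comp s).Homotopic ⟨Subtype.val, continuous_subtype_val⟩) ∧
      (∀ i x, 0 ≤ φ i x) ∧ (∀ i x, 0 < φ i x → x ∈ U i) ∧ (∀ x, ∃ i, 0 < φ i x) := by
  obtain ⟨U, hUo, hUc, hUs⟩ := hf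
  obtain ⟨v, hvU, hvo, hvcl⟩ :=
    exists_iUnion_eq_closure_subset hUo (fun x => Set.toFinite _) hUc
  have h := fun i => exists_continuous_zero_one_of_isClosed (hUo i).isClosed_compl
    isClosed_closure (disjoint_compl_left.mono_right (hvcl i))
  choose φ hz ho hmem using h
  refine ⟨U, φ, hUs, fun i x => (hmem i x).1, ?_, ?_⟩
  · intro i x hx
    by_contra hxU
    have : φ i x = 0 := hz i hxU
    rw [this] at hx; exact lt_irrefl 0 hx
  · intro x
    have : x ∈ ⋃ i, v i := hvU ▸ Set.mem_univ x
    obtain ⟨i, hi⟩ := mem_iUnion.1 this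
    exact ⟨i, by rw [ho i (subset_closure hi)]; norm_num⟩

lemma key {A X B Y : Type}
    [TopologicalSpace A] [TopologicalSpace X] [TopologicalSpace B] [TopologicalSpace Y]
    [NormalSpace X] [NormalSpace Y]
    {f : C(A, X)} {g : C(B, Y)} {n m : ℕ}
    (hf : CoveredBySections f n) (hg : CoveredBySections g m) :
    CoveredBySections (f.prodMap g) (n + m) := by
  obtain ⟨U, φ, hUs, hφ0, hφU, hφc⟩ := prep hf
  obtain ⟨V, ψ, hVs, hψV', hψV, hψc⟩ := prep hg
  have hψ0 := hψV'
  classical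
  set Sl : Fin (n+1) → X → ℝ := fun i x => ∑ i' ∈ Finset.univ.filter (· < i), φ i' x with hSl
  set Sr : Fin (n+1) → X → ℝ := fun i x => ∑ i' ∈ Finset.univ.filter (· ≤ i), φ i' x with hSr
  set Tl : Fin (m+1) → Y → ℝ := fun j y => ∑ j' ∈ Finset.univ.filter (· < j), ψ j' y with hTl
  set Tr : Fin (m+1) → Y → ℝ := fun j y => ∑ j' ∈ Finset.univ.filter (· ≤ j), ψ j' y with hTr
  set μ : (Fin (n+1) × Fin (m+1)) → (X × Y) → ℝ := fun c p =>
    min (Sr c.1 p.1) (Tr c.2 p.2) - max (Sl c.1 p.1) (Tl c.2 p.2) with hμ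
  have hμcont : ∀ c, Continuous (μ c) := by
    intro c
    apply Continuous.sub
    · exact Continuous.min
        ((continuous_finset_sum _ fun i' _ => (φ i').continuous).comp continuous_fst)
        ((continuous_finset_sum _ fun j' _ => (ψ j').continuous).comp continuous_snd)
    · exact Continuous.max
        ((continuous_finset_sum _ fun i' _ => (φ i').continuous).comp continuous_fst)
        ((continuous_finset_sum _ fun j' _ => (ψ j').continuous).comp continuous_snd)
  have hSstep : ∀ i x, Sr i x = φ i x + Sl i x := by
    intro i x
    show ∑ i' ∈ Finset.univ.filter (· ≤ i), φ i' x
      = φ i x + ∑ i' ∈ Finset.univ.filter (· < i), φ i' x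
    rw [show Finset.univ.filter (· ≤ i) = insert i (Finset.univ.filter (· < i)) from by
      ext c; simp [le_iff_lt_or_eq, or_comm]]
    rw [Finset.sum_insert (by simp)]
  have hTstep : ∀ j y, Tr j y = ψ j y + Tl j y := by
    intro j y
    show ∑ j' ∈ Finset.univ.filter (· ≤ j), ψ j' y
      = ψ j y + ∑ j' ∈ Finset.univ.filter (· < j), ψ j' y
    rw [show Finset.univ.filter (· ≤ j) = insert j (Finset.univ.filter (· < j)) from by
      ext c; simp [le_iff_lt_or_eq, or_comm]]
    rw [Finset.sum_insert (by simp)]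
  have hSmono : ∀ (i i' : Fin (n+1)) x, i < i' → Sr i x ≤ Sl i' x := by
    intro i i' x hii'
    apply Finset.sum_le_sum_of_subset_of_nonneg
    · intro c hc
      simp only [Finset.mem_filter, Finset.mem_univ, true_and] at hc ⊢
      exact lt_of_le_of_lt hc hii'
    · intro c _ _; exact hφ0 c x
  have hTmono : ∀ (j j' : Fin (m+1)) y, j < j' → Tr j y ≤ Tl j' y := by
    intro j j' y hjj'
    apply Finset.sum_le_sum_of_subset_of_nonneg
    · intro c hc
      simp only [Finset.mem_filter, Finset.mem_univ, true_and] at hc ⊢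
      exact lt_of_le_of_lt hc hjj'
    · intro c _ _; exact hψ0 c y
  have hμ_lt : ∀ (i j) (p : X × Y), 0 < μ (i, j) p →
      max (Sl i p.1) (Tl j p.2) < min (Sr i p.1) (Tr j p.2) := by
    intro i j p h; rw [hμ] at h; exact sub_pos.1 h
  have hposU : ∀ i j (p : X × Y), 0 < μ (i, j) p → p.1 ∈ U i ∧ p.2 ∈ V j := by
    intro i j p h
    have h' := hμ_lt i j p h
    constructor
    · apply hφU
      have h1 : Sl i p.1 < Sr i p.1 :=
        lt_of_le_of_lt (le_max_left _ _) (lt_of_lt_of_le h' (min_le_left _ _))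
      rw [hSstep] at h1; linarith
    · apply hψV
      have h1 : Tl j p.2 < Tr j p.2 :=
        lt_of_le_of_lt (le_max_right _ _) (lt_of_lt_of_le h' (min_le_right _ _))
      rw [hTstep] at h1; linarith
  have hsupp : ∀ p : X × Y, ∃ c, 0 < μ c p := by
    intro p
    obtain ⟨i1, hi1⟩ := hφc p.1
    obtain ⟨j1, hj1⟩ := hψc p.2
    set sI := Finset.univ.filter (fun i => 0 < φ i p.1) with hsI
    set sJ := Finset.univ.filter (fun j => 0 < ψ j p.2) with hsJ
    have hsIne : sI.Nonempty := ⟨i1, by simp [hsI, hi1]⟩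
    have hsJne : sJ.Nonempty := ⟨j1, by simp [hsJ, hj1]⟩
    set i₀ := sI.min' hsIne with hi₀
    set j₀ := sJ.min' hsJne with hj₀
    have hi₀pos : 0 < φ i₀ p.1 := by
      have h1 : i₀ ∈ sI := sI.min'_mem hsIne
      exact (Finset.mem_filter.1 h1).2
    have hj₀pos : 0 < ψ j₀ p.2 := by
      have h1 : j₀ ∈ sJ := sJ.min'_mem hsJne
      exact (Finset.mem_filter.1 h1).2
    have hSl0 : Sl i₀ p.1 = 0 := by
      apply Finset.sum_eq_zero
      intro c hc
      simp only [Finset.mem_filter, Finset.mem_univ, true_and] at hc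
      by_contra hne
      have hcpos : 0 < φ c p.1 := lt_of_le_of_ne (hφ0 c p.1) (Ne.symm hne)
      have : i₀ ≤ c := Finset.min'_le _ _ (by simp [hsI, hcpos])
      exact absurd hc (not_lt.2 this)
    have hTl0 : Tl j₀ p.2 = 0 := by
      apply Finset.sum_eq_zero
      intro c hc
      simp only [Finset.mem_filter, Finset.mem_univ, true_and] at hc
      by_contra hne
      have hcpos : 0 < ψ c p.2 := lt_of_le_of_ne (hψ0 c p.2) (Ne.symm hne)
      have : j₀ ≤ c := Finset.min'_le _ _ (by simp [hsJ, hcpos])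
      exact absurd hc (not_lt.2 this)
    refine ⟨(i₀, j₀), ?_⟩
    rw [hμ]
    simp only
    rw [hSl0, hTl0, max_self]
    have h1 : 0 < Sr i₀ p.1 := by rw [hSstep, hSl0]; linarith
    have h2 : 0 < Tr j₀ p.2 := by rw [hTstep, hTl0]; linarith
    have := lt_min h1 h2
    linarith
  have hcomp : ∀ (i i' : Fin (n+1)) (j j' : Fin (m+1)) (p : X × Y),
      0 < μ (i, j) p → 0 < μ (i', j') p → i < i' → j ≤ j' := by
    intro i i' j j' p h1 h2 hii'
    by_contra hjj
    push_neg at hjj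
    have h1' := hμ_lt i j p h1
    have h2' := hμ_lt i' j' p h2
    have e1 : Tl j p.2 < Sr i p.1 :=
      lt_of_le_of_lt (le_max_right _ _) (lt_of_lt_of_le h1' (min_le_left _ _))
    have e2 : Sl i' p.1 < Tr j' p.2 :=
      lt_of_le_of_lt (le_max_left _ _) (lt_of_lt_of_le h2' (min_le_right _ _))
    have e3 : Sr i p.1 ≤ Sl i' p.1 := hSmono i i' p.1 hii'
    have e4 : Tr j' p.2 ≤ Tl j p.2 := hTmono j' j p.2 hjj
    linarith

  -- comparability restated over pairs
  have hcomp' : ∀ (c c' : Fin (n+1) × Fin (m+1)) (p : X × Y),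
      0 < μ c p → 0 < μ c' p → c.1 < c'.1 → c.2 ≤ c'.2 := by
    rintro ⟨i, j⟩ ⟨i', j'⟩ p h1 h2 h3
    exact hcomp i i' j j' p h1 h2 h3
  have hposU' : ∀ (c : Fin (n+1) × Fin (m+1)) (p : X × Y),
      0 < μ c p → p.1 ∈ U c.1 ∧ p.2 ∈ V c.2 := by
    rintro ⟨i, j⟩ p h1
    exact hposU i j p h1
  -- the sets W sig
  set W : Finset (Fin (n+1) × Fin (m+1)) → Set (X × Y) := fun sig =>
    ⋂ c ∈ sig, ({p : X × Y | 0 < μ c p} ∩ ⋂ c' ∈ sigᶜ, {p : X × Y | μ c' p < μ c p}) with hW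
  have hWmem : ∀ sig (p : X × Y), p ∈ W sig ↔
      ∀ c ∈ sig, 0 < μ c p ∧ ∀ c' ∉ sig, μ c' p < μ c p := by
    intro sig p
    rw [hW]
    simp [Set.mem_iInter, Finset.mem_compl]
  have hWo : ∀ sig, IsOpen (W sig) := by
    intro sig
    rw [hW]
    apply isOpen_biInter_finset
    intro c hc
    apply IsOpen.inter
    · exact isOpen_lt continuous_const (hμcont c)
    · exact isOpen_biInter_finset fun c' hc' => isOpen_lt (hμcont c') (hμcont c)
  have hWdis : ∀ sig tau, sig ≠ tau → sig.card = tau.card → Disjoint (W sig) (W tau) := by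
    intro sig tau hne hcard
    rw [Set.disjoint_left]
    intro p hpsig hptau
    obtain ⟨c, hcsig, hctau⟩ : ∃ c ∈ sig, c ∉ tau := by
      by_contra hsub
      push_neg at hsub
      exact hne (Finset.eq_of_subset_of_card_le hsub (le_of_eq hcard.symm))
    obtain ⟨c', hc'tau, hc'sig⟩ : ∃ c' ∈ tau, c' ∉ sig := by
      by_contra hsub
      push_neg at hsub
      exact hne (Finset.eq_of_subset_of_card_le hsub (le_of_eq hcard)).symm
    have h1 := ((hWmem sig p).1 hpsig c hcsig).2 c' hc'sig
    have h2 := ((hWmem tau p).1 hptau c' hc'tau).2 c hctau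
    linarith
  have hWcov : ∀ p : X × Y, ∃ sig : Finset (Fin (n+1) × Fin (m+1)),
      sig.Nonempty ∧ sig.card ≤ n + m + 1 ∧ p ∈ W sig := by
    intro p
    set sigp := Finset.univ.filter (fun c => 0 < μ c p) with hsigp
    obtain ⟨c₀, hc₀⟩ := hsupp p
    have hc₀m : c₀ ∈ sigp := by simp [hsigp, hc₀]
    refine ⟨sigp, ⟨c₀, hc₀m⟩, ?_, ?_⟩
    · have hinj : Set.InjOn (fun c : Fin (n+1) × Fin (m+1) => (c.1 : ℕ) + (c.2 : ℕ)) sigp := by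
        intro c hc c' hc' hsum
        simp only at hsum
        have hcpos : 0 < μ c p := (Finset.mem_filter.1 hc).2
        have hc'pos : 0 < μ c' p := (Finset.mem_filter.1 hc').2
        rcases lt_trichotomy c.1 c'.1 with h | h | h
        · have hj : (c.2 : ℕ) ≤ (c'.2 : ℕ) := hcomp' c c' p hcpos hc'pos h
          have h1 : (c.1 : ℕ) < (c'.1 : ℕ) := h
          omega
        · have h2 : (c.2 : ℕ) = (c'.2 : ℕ) := by
            have h1 : (c.1 : ℕ) = (c'.1 : ℕ) := congrArg Fin.val h
            omega
          exact Prod.ext h (Fin.ext h2)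
        · have hj : (c'.2 : ℕ) ≤ (c.2 : ℕ) := hcomp' c' c p hc'pos hcpos h
          have h1 : (c'.1 : ℕ) < (c.1 : ℕ) := h
          omega
      have := Finset.card_le_card_of_injOn (t := Finset.range (n + m + 1))
        (fun c : Fin (n+1) × Fin (m+1) => (c.1 : ℕ) + (c.2 : ℕ))
        (fun c _ => by
          simp only [Finset.coe_range, Set.mem_Iio]
          have h1 : (c.1 : ℕ) ≤ n := Fin.is_le c.1
          have h2 : (c.2 : ℕ) ≤ m := Fin.is_le c.2
          omega)
        hinj
      simpa using this
    · rw [hWmem]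
      intro c hc
      have hcpos : 0 < μ c p := (Finset.mem_filter.1 hc).2
      refine ⟨hcpos, ?_⟩
      intro c' hc'
      have hnp : ¬ 0 < μ c' p := fun hpos => hc' (by simp [hsigp, hpos])
      have := le_of_not_gt hnp
      linarith
  refine ⟨fun r => ⋃ (sig : {sig : Finset (Fin (n+1) × Fin (m+1)) // sig.card = (r : ℕ) + 1}), W sig.1,
    fun r => isOpen_iUnion fun sig => hWo sig.1, ?_, ?_⟩
  · apply Set.eq_univ_of_forall
    intro p
    obtain ⟨sig, hne, hle, hmem⟩ := hWcov p
    have hcard : 1 ≤ sig.card := Finset.card_pos.2 hne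
    refine mem_iUnion.2 ⟨⟨sig.card - 1, by omega⟩, ?_⟩
    exact mem_iUnion.2 ⟨⟨sig, by show sig.card = sig.card - 1 + 1; omega⟩, hmem⟩
  · intro r
    apply glue_sections (f.prodMap g)
      (fun sig : {sig : Finset (Fin (n+1) × Fin (m+1)) // sig.card = (r : ℕ) + 1} => W sig.1)
      (fun sig => hWo sig.1)
      (fun sig tau hne => hWdis sig.1 tau.1 (fun h => hne (Subtype.ext h)) (sig.2.trans tau.2.symm))
    intro sig
    have hsigne : sig.1.Nonempty := Finset.card_pos.1 (by rw [sig.2]; omega)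
    obtain ⟨c, hc⟩ := hsigne
    apply piece_section f g (hUs c.1) (hVs c.2)
    intro p hp
    have hcpos : 0 < μ c p := ((hWmem sig.1 p).1 hp c hc).1
    have hm := hposU' c p hcpos
    exact Set.mem_prod.2 ⟨hm.1, hm.2⟩

/-- Sectional category of a product map: `secat(f × g) ≤ secat(f) + secat(g)`
for maps into normal path-connected spaces. -/
theorem secat_prodMap_le {A X B Y : Type}
    [TopologicalSpace A] [TopologicalSpace X] [TopologicalSpace B] [TopologicalSpace Y]
    [PathConnectedSpace X] [PathConnectedSpace Y] [NormalSpace X] [NormalSpace Y]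
    (f : C(A, X)) (g : C(B, Y)) :
    secat (f.prodMap g) ≤ secat f + secat g := by
  by_cases hfe : {n : ℕ | CoveredBySections f n}.Nonempty
  · by_cases hge : {n : ℕ | CoveredBySections g n}.Nonempty
    · have hnf : CoveredBySections f (sInf {n : ℕ | CoveredBySections f n}) :=
        Nat.sInf_mem hfe
      have hng : CoveredBySections g (sInf {n : ℕ | CoveredBySections g n}) :=
        Nat.sInf_mem hge
      have hkey := key hnf hng
      have h1 : secat (f.prodMap g)
          ≤ ((sInf {n : ℕ | CoveredBySections f n} : ℕ) : ℕ∞)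
            + ((sInf {n : ℕ | CoveredBySections g n} : ℕ) : ℕ∞) := by
        have hmem := Set.mem_image_of_mem (fun n : ℕ => (n : ℕ∞))
          (show _ ∈ {n : ℕ | CoveredBySections (f.prodMap g) n} from hkey)
        have := sInf_le hmem
        rw [secat]
        refine le_trans this ?_
        show ((sInf {n : ℕ | CoveredBySections f n}
            + sInf {n : ℕ | CoveredBySections g n} : ℕ) : ℕ∞) ≤ _
        rw [Nat.cast_add]
      have h2 : ((sInf {n : ℕ | CoveredBySections f n} : ℕ) : ℕ∞) ≤ secat f := by
        apply le_sInf
        rintro b ⟨k, hk, rfl⟩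
        exact Nat.cast_le.2 (Nat.sInf_le hk)
      have h3 : ((sInf {n : ℕ | CoveredBySections g n} : ℕ) : ℕ∞) ≤ secat g := by
        apply le_sInf
        rintro b ⟨k, hk, rfl⟩
        exact Nat.cast_le.2 (Nat.sInf_le hk)
      exact le_trans h1 (add_le_add h2 h3)
    · have : secat g = ⊤ := by
        rw [secat, Set.not_nonempty_iff_eq_empty.1 hge, Set.image_empty, sInf_empty]
      rw [this, add_top]; exact le_top
  · have : secat f = ⊤ := by
      rw [secat, Set.not_nonempty_iff_eq_empty.1 hfe, Set.image_empty, sInf_empty]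
    rw [this, top_add]; exact le_top
end

section
/- For path-connected spaces X and Y (with X × X and Y × Y normal), TC(X × Y) ≤ TC(X) + TC(Y). -/
open unitInterval Set ContinuousMap

/-- `X × X` admits a cover by `n+1` open sets, on each of which the free path
fibration `ev₀,₁ : Xᴵ → X × X` admits a continuous section. -/
def TCCover (X : Type*) [TopologicalSpace X] (n : ℕ) : Prop :=
  ∃ U : Fin (n + 1) → Set (X × X), (∀ i, IsOpen (U i)) ∧ (⋃ i, U i) = Set.univ ∧
    ∀ i, ∃ s : C(U i, C(I, X)),
      ∀ p : U i, (s p) 0 = (p : X × X).1 ∧ (s p) 1 = (p : X × X).2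

lemma exists_bumps {Z : Type*} [TopologicalSpace Z] [NormalSpace Z] {N : ℕ}
    (U : Fin N → Set Z) (ho : ∀ i, IsOpen (U i)) (hc : (⋃ i, U i) = univ) :
    ∃ f : Fin N → C(Z, ℝ), (∀ i z, 0 ≤ f i z) ∧ (∀ i z, f i z ≠ 0 → z ∈ U i) ∧
      (∀ z, ∃ i, 0 < f i z) := by
  obtain ⟨v, hvU, hvo, hvcl⟩ := exists_iUnion_eq_closure_subset ho
    (fun x => Set.toFinite _) hc
  have key : ∀ i : Fin N, ∃ f : C(Z, ℝ), EqOn f 0 (U i)ᶜ ∧ EqOn f 1 (closure (v i)) ∧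
      ∀ x, f x ∈ Icc (0:ℝ) 1 := fun i =>
    exists_continuous_zero_one_of_isClosed (ho i).isClosed_compl isClosed_closure
      (disjoint_compl_left_iff_subset.2 (hvcl i))
  choose f hf0 hf1 hf01 using key
  refine ⟨f, fun i z => (hf01 i z).1, fun i z hz => ?_, fun z => ?_⟩
  · by_contra hzU
    exact hz (hf0 i hzU)
  · have : z ∈ ⋃ i, v i := hvU ▸ mem_univ z
    obtain ⟨i, hi⟩ := mem_iUnion.1 this
    exact ⟨i, by rw [hf1 i (subset_closure hi)]; norm_num⟩

lemma tccover_prod {X Y : Type} [TopologicalSpace X] [TopologicalSpace Y]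
    [NormalSpace (X × X)] [NormalSpace (Y × Y)] {n m : ℕ}
    (hX : TCCover X n) (hY : TCCover Y m) : TCCover (X × Y) (n + m) := by
  classical
  obtain ⟨U, hUo, hUc, hUs⟩ := hX
  obtain ⟨V, hVo, hVc, hVs⟩ := hY
  choose sX hsX using hUs
  choose sY hsY using hVs
  obtain ⟨f, hf0, hfU, hfpos⟩ := exists_bumps U hUo hUc
  obtain ⟨g, hg0, hgV, hgpos⟩ := exists_bumps V hVo hVc
  -- the shuffle map
  set Φ : (X × Y) × (X × Y) → (X × X) × (Y × Y) :=
    fun c => ((c.1.1, c.2.1), (c.1.2, c.2.2)) with hΦ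
  have hΦc : Continuous Φ := by fun_prop
  set h : Fin (n+1) → Fin (m+1) → ((X × Y) × (X × Y)) → ℝ :=
    fun i j c => f i (Φ c).1 * g j (Φ c).2 with hh
  have hhc : ∀ i j, Continuous (h i j) :=
    fun i j => (((f i).continuous.comp (continuous_fst.comp hΦc)).mul
      ((g j).continuous.comp (continuous_snd.comp hΦc)))
  have hhnn : ∀ i j c, 0 ≤ h i j c := fun i j c =>
    mul_nonneg (hf0 _ _) (hg0 _ _)
  have hfac : ∀ i j c, 0 < h i j c → 0 < f i (Φ c).1 ∧ 0 < g j (Φ c).2 := by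
    intro i j c h1
    have h1' : 0 < f i (Φ c).1 * g j (Φ c).2 := h1
    constructor
    · rcases (hf0 i (Φ c).1).lt_or_eq with h' | h'
      · exact h'
      · rw [← h', zero_mul] at h1'; exact absurd h1' (lt_irrefl 0)
    · rcases (hg0 j (Φ c).2).lt_or_eq with h' | h'
      · exact h'
      · rw [← h', mul_zero] at h1'; exact absurd h1' (lt_irrefl 0)
  set W : Fin (n+1) → Fin (m+1) → Set ((X × Y) × (X × Y)) :=
    fun i j => {c | 0 < h i j c ∧ ∀ (k : Fin (n+1)) (l : Fin (m+1)),
      (i:ℕ) + (j:ℕ) ≤ (k:ℕ) + (l:ℕ) → (k, l) ≠ (i, j) → h k l c < h i j c} with hWdef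
  have hWU : ∀ i j c, c ∈ W i j → (Φ c).1 ∈ U i :=
    fun i j c hc => hfU i _ (ne_of_gt (hfac i j c hc.1).1)
  have hWV : ∀ i j c, c ∈ W i j → (Φ c).2 ∈ V j :=
    fun i j c hc => hgV j _ (ne_of_gt (hfac i j c hc.1).2)
  -- openness
  have hWo : ∀ i j, IsOpen (W i j) := by
    intro i j
    have : W i j = {c | 0 < h i j c} ∩ ⋂ (k : Fin (n+1)), ⋂ (l : Fin (m+1)),
        {c | (i:ℕ) + (j:ℕ) ≤ (k:ℕ) + (l:ℕ) → (k, l) ≠ (i, j) → h k l c < h i j c} := by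
      ext c
      simp only [hWdef, mem_setOf_eq, mem_inter_iff, mem_iInter]
    rw [this]
    refine (isOpen_lt continuous_const (hhc i j)).inter
      (isOpen_iInter_of_finite fun k => isOpen_iInter_of_finite fun l => ?_)
    by_cases hcond : (i:ℕ) + (j:ℕ) ≤ (k:ℕ) + (l:ℕ) ∧ (k, l) ≠ (i, j)
    · have : {c | (i:ℕ) + (j:ℕ) ≤ (k:ℕ) + (l:ℕ) → (k, l) ≠ (i, j) → h k l c < h i j c}
          = {c | h k l c < h i j c} := by
        ext c; simp [hcond.1, hcond.2]
      rw [this]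
      exact isOpen_lt (hhc k l) (hhc i j)
    · have : {c | (i:ℕ) + (j:ℕ) ≤ (k:ℕ) + (l:ℕ) → (k, l) ≠ (i, j) → h k l c < h i j c}
          = univ := by
        ext c; simp only [mem_setOf_eq, mem_univ, iff_true]
        intro h1 h2; exact absurd ⟨h1, h2⟩ hcond
      rw [this]; exact isOpen_univ
  -- disjointness at equal sum
  have hdisj : ∀ (i k : Fin (n+1)) (j l : Fin (m+1)), (i:ℕ) + (j:ℕ) = (k:ℕ) + (l:ℕ) →
      ∀ c, c ∈ W i j → c ∈ W k l → i = k ∧ j = l := by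
    intro i k j l hsum c hij hkl
    by_contra hne
    have hne' : (k, l) ≠ (i, j) := by
      intro e
      rw [Prod.mk.injEq] at e
      exact hne ⟨e.1.symm, e.2.symm⟩
    have hne'' : (i, j) ≠ (k, l) := fun e => hne' e.symm
    have h1 := hij.2 k l hsum.le hne'
    have h2 := hkl.2 i j hsum.ge hne''
    exact lt_asymm h1 h2
  -- coverage
  have hcov : ∀ c : (X × Y) × (X × Y), ∃ i j, c ∈ W i j := by
    intro c
    obtain ⟨i0, hi0⟩ := hfpos (Φ c).1
    obtain ⟨j0, hj0⟩ := hgpos (Φ c).2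
    set P : Finset (Fin (n+1) × Fin (m+1)) :=
      Finset.univ.filter (fun p => 0 < h p.1 p.2 c) with hP
    have hPne : P.Nonempty := ⟨(i0, j0), by
      simp only [hP, Finset.mem_filter, Finset.mem_univ, true_and]
      exact mul_pos hi0 hj0⟩
    obtain ⟨p, hpP, hpmax⟩ := P.exists_max_image (fun p => (p.1:ℕ) + (p.2:ℕ)) hPne
    have hppos : 0 < h p.1 p.2 c := by
      simpa only [hP, Finset.mem_filter, Finset.mem_univ, true_and] using hpP
    refine ⟨p.1, p.2, hppos, fun k l hle hne => ?_⟩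
    have hzero : ¬ 0 < h k l c := by
      intro hpos
      have hklP : (k, l) ∈ P := by
        simp only [hP, Finset.mem_filter, Finset.mem_univ, true_and]; exact hpos
      have hge := hpmax (k, l) hklP
      simp only at hge
      have hsum : (k:ℕ) + (l:ℕ) = (p.1:ℕ) + (p.2:ℕ) := le_antisymm hge hle
      have hkp : (k:ℕ) ≠ (p.1:ℕ) := by
        intro e
        apply hne
        have e2 : (l:ℕ) = (p.2:ℕ) := by omega
        rw [Prod.mk.injEq]
        exact ⟨Fin.ext e, Fin.ext e2⟩
      have hfp1 := hfac p.1 p.2 c hppos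
      have hfkl := hfac k l c hpos
      rcases hkp.lt_or_gt with hlt | hlt
      · -- k < p.1, so p.2 < l; pair (p.1, l) has larger sum
        have hmem : (p.1, l) ∈ P := by
          simp only [hP, Finset.mem_filter, Finset.mem_univ, true_and]
          exact mul_pos hfp1.1 hfkl.2
        have := hpmax (p.1, l) hmem
        simp only at this
        omega
      · have hmem : (k, p.2) ∈ P := by
          simp only [hP, Finset.mem_filter, Finset.mem_univ, true_and]
          exact mul_pos hfkl.1 hfp1.2
        have := hpmax (k, p.2) hmem
        simp only at this
        omega
    have : h k l c = 0 := le_antisymm (not_lt.1 hzero) (hhnn k l c)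
    rw [this]; exact hppos
  -- the cover of the product
  set C : Fin (n + m + 1) → Set ((X × Y) × (X × Y)) :=
    fun r => ⋃ (i : Fin (n+1)), ⋃ (j : Fin (m+1)),
      ⋃ (_ : (i:ℕ) + (j:ℕ) = (r:ℕ)), W i j with hC
  refine ⟨C, fun r => isOpen_iUnion fun i => isOpen_iUnion fun j =>
    isOpen_iUnion fun _ => hWo i j, ?_, fun r => ?_⟩
  · rw [eq_univ_iff_forall]
    intro c
    obtain ⟨i, j, hc⟩ := hcov c
    have hr : (i:ℕ) + (j:ℕ) < n + m + 1 := by omega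
    refine mem_iUnion.2 ⟨⟨(i:ℕ) + (j:ℕ), hr⟩, ?_⟩
    exact mem_iUnion.2 ⟨i, mem_iUnion.2 ⟨j, mem_iUnion.2 ⟨rfl, hc⟩⟩⟩
  · -- a section over C r by gluing
    set ι := {q : Fin (n+1) × Fin (m+1) // (q.1:ℕ) + (q.2:ℕ) = (r:ℕ)} with hι
    set S : ι → Set ↥(C r) := fun q => Subtype.val ⁻¹' (W q.1.1 q.1.2) with hS
    have hmem : ∀ x : ↥(C r), ∃ q : ι, (x : (X × Y) × (X × Y)) ∈ W q.1.1 q.1.2 := by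
      intro x
      have hx := x.2
      simp only [hC, mem_iUnion] at hx
      obtain ⟨i, j, hsum, hxij⟩ := hx
      exact ⟨⟨(i, j), hsum⟩, hxij⟩
    have e1c : ∀ q : ι, Continuous (fun z : ↥(S q) =>
        (⟨(Φ (z.1 : (X × Y) × (X × Y))).1, hWU q.1.1 q.1.2 _ z.2⟩ : ↥(U q.1.1))) :=
      fun q => Continuous.subtype_mk
        ((continuous_fst.comp hΦc).comp
          (continuous_subtype_val.comp continuous_subtype_val)) _
    have e2c : ∀ q : ι, Continuous (fun z : ↥(S q) =>
        (⟨(Φ (z.1 : (X × Y) × (X × Y))).2, hWV q.1.1 q.1.2 _ z.2⟩ : ↥(V q.1.2))) :=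
      fun q => Continuous.subtype_mk
        ((continuous_snd.comp hΦc).comp
          (continuous_subtype_val.comp continuous_subtype_val)) _
    have hψ : ∀ q : ι, Continuous (fun z : ↥(S q) × I =>
        ((sX q.1.1 ⟨(Φ (z.1.1 : (X × Y) × (X × Y))).1, hWU q.1.1 q.1.2 _ z.1.2⟩ z.2,
          sY q.1.2 ⟨(Φ (z.1.1 : (X × Y) × (X × Y))).2, hWV q.1.1 q.1.2 _ z.1.2⟩ z.2) : X × Y)) := by
      intro q
      apply Continuous.prodMk
      · exact (continuous_uncurry_of_continuous (sX q.1.1)).comp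
          ((e1c q).prodMap continuous_id)
      · exact (continuous_uncurry_of_continuous (sY q.1.2)).comp
          ((e2c q).prodMap continuous_id)
    set φ : ∀ q : ι, C(↥(S q), C(I, X × Y)) :=
      fun q => ContinuousMap.curry ⟨_, hψ q⟩ with hφdef
    have hφ : ∀ (q q' : ι) (x : ↥(C r)) (hx : x ∈ S q) (hx' : x ∈ S q'),
        φ q ⟨x, hx⟩ = φ q' ⟨x, hx'⟩ := by
      intro q q' x hx hx'
      have : q = q' := by
        have e := hdisj q.1.1 q'.1.1 q.1.2 q'.1.2 (q.2.trans q'.2.symm) x.1 hx hx'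
        exact Subtype.ext (Prod.ext e.1 e.2)
      subst this; rfl
    have hnhds : ∀ x : ↥(C r), ∃ q, S q ∈ nhds x := by
      intro x
      obtain ⟨q, hq⟩ := hmem x
      exact ⟨q, ((hWo q.1.1 q.1.2).preimage continuous_subtype_val).mem_nhds hq⟩
    refine ⟨liftCover S φ hφ hnhds, fun x => ?_⟩
    obtain ⟨q, hq⟩ := hmem x
    have hlift : liftCover S φ hφ hnhds x = φ q ⟨x, hq⟩ :=
      liftCover_coe (⟨x, hq⟩ : ↥(S q))
    rw [hlift]
    constructor
    · show (ContinuousMap.curry ⟨_, hψ q⟩ ⟨x, hq⟩) 0 = _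
      rw [ContinuousMap.curry_apply]
      show ((sX q.1.1 _ 0, sY q.1.2 _ 0) : X × Y) = _
      rw [(hsX q.1.1 _).1, (hsY q.1.2 _).1]
    · show (ContinuousMap.curry ⟨_, hψ q⟩ ⟨x, hq⟩) 1 = _
      rw [ContinuousMap.curry_apply]
      show ((sX q.1.1 _ 1, sY q.1.2 _ 1) : X × Y) = _
      rw [(hsX q.1.1 _).2, (hsY q.1.2 _).2]


/-- Farber's (reduced) topological complexity, as an extended natural number. -/
noncomputable def TopComplexity (X : Type*) [TopologicalSpace X] : ℕ∞ :=
  sInf ((fun n : ℕ => (n : ℕ∞)) '' {n : ℕ | TCCover X n})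

/-- Topological complexity of a product: `TC(X × Y) ≤ TC(X) + TC(Y)`. -/
theorem tc_prod_le (X Y : Type) [TopologicalSpace X] [TopologicalSpace Y]
    [PathConnectedSpace X] [PathConnectedSpace Y]
    [NormalSpace (X × X)] [NormalSpace (Y × Y)] :
    TopComplexity (X × Y) ≤ TopComplexity X + TopComplexity Y := by
  classical
  by_cases hX : ∃ n, TCCover X n
  swap
  · have : TopComplexity X = ⊤ := by
      rw [TopComplexity]
      rw [show ((fun n : ℕ => (n : ℕ∞)) '' {n : ℕ | TCCover X n}) = ∅ from ?_]
      · exact sInf_empty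
      rw [image_eq_empty]
      exact eq_empty_iff_forall_notMem.2 fun n hn => hX ⟨n, hn⟩
    rw [this, top_add]; exact le_top
  by_cases hY : ∃ n, TCCover Y n
  swap
  · have : TopComplexity Y = ⊤ := by
      rw [TopComplexity]
      rw [show ((fun n : ℕ => (n : ℕ∞)) '' {n : ℕ | TCCover Y n}) = ∅ from ?_]
      · exact sInf_empty
      rw [image_eq_empty]
      exact eq_empty_iff_forall_notMem.2 fun n hn => hY ⟨n, hn⟩
    rw [this, add_top]; exact le_top
  have hXeq : TopComplexity X = (Nat.find hX : ℕ∞) := by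
    apply le_antisymm
    · exact sInf_le ⟨Nat.find hX, Nat.find_spec hX, rfl⟩
    · apply le_sInf
      rintro a ⟨k, hk, rfl⟩
      show ((Nat.find hX : ℕ∞)) ≤ (k : ℕ∞)
      exact_mod_cast Nat.find_min' hX hk
  have hYeq : TopComplexity Y = (Nat.find hY : ℕ∞) := by
    apply le_antisymm
    · exact sInf_le ⟨Nat.find hY, Nat.find_spec hY, rfl⟩
    · apply le_sInf
      rintro a ⟨k, hk, rfl⟩
      show ((Nat.find hY : ℕ∞)) ≤ (k : ℕ∞)
      exact_mod_cast Nat.find_min' hY hk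
  rw [hXeq, hYeq, ← Nat.cast_add]
  exact sInf_le ⟨_, tccover_prod (Nat.find_spec hX) (Nat.find_spec hY), rfl⟩
end

section
/- Suppose given a commutative square with vertical maps f : A → X and g : C → Y and a map ι : X → Y such that the square commutes (the composite A → C → Y equals ι ∘ f). Then secat(g) + 1 ≤ (secat(ι) + 1)(secat(f) + 1). -/
open unitInterval Set ContinuousMap

universe u

/-- A cofibration: a map with the homotopy extension property with respect to
all spaces. -/
def IsCofibration {A X : Type u} [TopologicalSpace A] [TopologicalSpace X]
    (i : C(A, X)) : Prop :=
  ∀ (Z : Type u) [TopologicalSpace Z] (h₀ : C(X, Z)) (H : C(A × I, Z)),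
    (∀ a, H (a, 0) = h₀ (i a)) →
    ∃ G : C(X × I, Z), (∀ a t, G (i a, t) = H (a, t)) ∧ ∀ x, G (x, 0) = h₀ x

lemma secat_le {A X : Type*} [TopologicalSpace A] [TopologicalSpace X]
    {f : C(A, X)} {n : ℕ} (h : CoveredBySections f n) : secat f ≤ n :=
  sInf_le ⟨n, h, rfl⟩

lemma secat_eq_top_or {A X : Type*} [TopologicalSpace A] [TopologicalSpace X]
    (f : C(A, X)) : secat f = ⊤ ∨ ∃ n, CoveredBySections f n ∧ secat f = n := by
  by_cases hS : {n : ℕ | CoveredBySections f n}.Nonempty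
  · right
    refine ⟨sInf {n : ℕ | CoveredBySections f n}, Nat.sInf_mem hS, le_antisymm
      (secat_le (Nat.sInf_mem hS)) ?_⟩
    apply le_sInf
    rintro b ⟨k, hk, rfl⟩
    show ((sInf _ : ℕ) : ℕ∞) ≤ (k : ℕ∞)
    exact_mod_cast Nat.sInf_le hk
  · left
    rw [Set.not_nonempty_iff_eq_empty] at hS
    simp [secat, hS]

lemma covered_square {A C X Y : Type*} [TopologicalSpace A] [TopologicalSpace C]
    [TopologicalSpace X] [TopologicalSpace Y]
    (f : C(A, X)) (g : C(C, Y)) (ι : C(X, Y)) (φ : C(A, C))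
    (hcomm : ∀ a, g (φ a) = ι (f a)) {n m : ℕ}
    (hf : CoveredBySections f n) (hι : CoveredBySections ι m) :
    CoveredBySections g (m * n + m + n) := by
  obtain ⟨U, hUopen, hUcov, hUsec⟩ := hf
  obtain ⟨V, hVopen, hVcov, hVsec⟩ := hι
  choose t ht using hUsec
  choose s hs using hVsec
  -- product cover
  have hcount : m * n + m + n + 1 = (m + 1) * (n + 1) := by ring
  let e : Fin (m * n + m + n + 1) ≃ Fin (m + 1) × Fin (n + 1) :=
    (finCongr hcount).trans finProdFinEquiv.symm
  let W : Fin (m + 1) × Fin (n + 1) → Set Y :=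
    fun p => Subtype.val '' ((s p.1) ⁻¹' (U p.2))
  have key : ∀ p : Fin (m + 1) × Fin (n + 1), ∃ sec : C(W p, C),
      (g.comp sec).Homotopic ⟨Subtype.val, continuous_subtype_val⟩ := by
    rintro ⟨j, i⟩
    have hsub : W (j, i) ⊆ V j := by rintro y ⟨a, _, rfl⟩; exact a.2
    let incW : C(W (j, i), V j) :=
      ⟨fun w => ⟨w.1, hsub w.2⟩, continuous_subtype_val.subtype_mk _⟩
    have hmem : ∀ w : W (j, i), s j (incW w) ∈ U i := by
      rintro ⟨y, a, ha, rfl⟩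
      have : incW ⟨a.1, ⟨a, ha, rfl⟩⟩ = a := Subtype.ext rfl
      rw [this]; exact ha
    let r : C(W (j, i), U i) :=
      ⟨fun w => ⟨s j (incW w), hmem w⟩,
        (((s j).continuous.comp incW.continuous).subtype_mk _)⟩
    refine ⟨φ.comp ((t i).comp r), ?_⟩
    have e1 : g.comp (φ.comp ((t i).comp r)) = ι.comp ((f.comp (t i)).comp r) := by
      ext w; simp [hcomm]
    have h1 : ((f.comp (t i)).comp r).Homotopic
        ((⟨Subtype.val, continuous_subtype_val⟩ : C(U i, X)).comp r) :=
      Homotopic.comp (ht i) (Homotopic.refl r)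
    have h2 : (ι.comp ((f.comp (t i)).comp r)).Homotopic
        (ι.comp ((⟨Subtype.val, continuous_subtype_val⟩ : C(U i, X)).comp r)) :=
      Homotopic.comp (Homotopic.refl ι) h1
    have e2 : ι.comp ((⟨Subtype.val, continuous_subtype_val⟩ : C(U i, X)).comp r)
        = (ι.comp (s j)).comp incW := by ext w; rfl
    have h3 : ((ι.comp (s j)).comp incW).Homotopic
        ((⟨Subtype.val, continuous_subtype_val⟩ : C(V j, Y)).comp incW) :=
      Homotopic.comp (hs j) (Homotopic.refl incW)
    have e3 : ((⟨Subtype.val, continuous_subtype_val⟩ : C(V j, Y)).comp incW)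
        = (⟨Subtype.val, continuous_subtype_val⟩ : C(W (j, i), Y)) := by ext w; rfl
    rw [e1]
    exact h2.trans (e2 ▸ e3 ▸ h3)
  refine ⟨fun k => W (e k), ?_, ?_, fun k => key (e k)⟩
  · intro k
    exact (hVopen (e k).1).isOpenMap_subtype_val _
      ((hUopen (e k).2).preimage (s (e k).1).continuous)
  · apply Set.eq_univ_of_forall
    intro y
    have hy : y ∈ ⋃ j, V j := hVcov ▸ Set.mem_univ y
    obtain ⟨j, hj⟩ := Set.mem_iUnion.mp hy
    have hx : s j ⟨y, hj⟩ ∈ ⋃ i, U i := hUcov ▸ Set.mem_univ _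
    obtain ⟨i, hi⟩ := Set.mem_iUnion.mp hx
    exact Set.mem_iUnion.mpr ⟨e.symm (j, i), by
      simpa using ⟨(⟨y, hj⟩ : V j), hi, rfl⟩⟩

/-- Sectional category in a commutative square: if `g ∘ φ = ι ∘ f` then
`secat(g) + 1 ≤ (secat(ι) + 1)(secat(f) + 1)`. -/
theorem secat_square {A C X Y : Type u} [TopologicalSpace A] [TopologicalSpace C]
    [TopologicalSpace X] [TopologicalSpace Y]
    [PathConnectedSpace A] [PathConnectedSpace C]
    [PathConnectedSpace X] [PathConnectedSpace Y]
    (f : C(A, X)) (g : C(C, Y)) (ι : C(X, Y)) (φ : C(A, C))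
    (hf : IsCofibration f) (hg : IsCofibration g) (hι : IsCofibration ι)
    (hcomm : ∀ a, g (φ a) = ι (f a)) :
    secat g + 1 ≤ (secat ι + 1) * (secat f + 1) := by
  have hfpos : (0 : ℕ∞) < secat f + 1 := lt_of_lt_of_le zero_lt_one le_add_self
  have hιpos : (0 : ℕ∞) < secat ι + 1 := lt_of_lt_of_le zero_lt_one le_add_self
  rcases secat_eq_top_or ι with hιtop | ⟨m, hm, hιeq⟩
  · rw [hιtop, top_add, ENat.top_mul hfpos.ne']
    exact le_top
  rcases secat_eq_top_or f with hftop | ⟨n, hn, hfeq⟩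
  · rw [hftop, top_add, ENat.mul_top hιpos.ne']
    exact le_top
  have hle : secat g ≤ ((m * n + m + n : ℕ) : ℕ∞) :=
    secat_le (covered_square f g ι φ hcomm hn hm)
  rw [hιeq, hfeq]
  calc secat g + 1 ≤ ((m * n + m + n : ℕ) : ℕ∞) + 1 := add_le_add_left hle 1
    _ = ((m : ℕ∞) + 1) * ((n : ℕ∞) + 1) := by push_cast; ring
end

section
/- Let F --ι--> E --π--> B be a fibration over a well-pointed path-connected base, and suppose given maps f : A → F and g : C → E and a map A → C making the square with ι commute. Then secat(g) + 1 ≤ (cat(B) + 1)(secat(f) + 1). -/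
open unitInterval Set ContinuousMap

universe u

/-- `X` admits a cover by `n+1` open sets, each contractible in `X`. -/
def NullCover (X : Type*) [TopologicalSpace X] (n : ℕ) : Prop :=
  ∃ U : Fin (n + 1) → Set X, (∀ i, IsOpen (U i)) ∧ (⋃ i, U i) = Set.univ ∧
    ∀ i, (⟨Subtype.val, continuous_subtype_val⟩ : C(U i, X)).Nullhomotopic

/-- The (reduced) Lusternik-Schnirelmann category, as an extended natural number. -/
noncomputable def LScat (X : Type*) [TopologicalSpace X] : ℕ∞ :=
  sInf ((fun n : ℕ => (n : ℕ∞)) '' {n : ℕ | NullCover X n})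

/-- A Hurewicz fibration: a map with the homotopy lifting property with respect to
all spaces. -/
def IsHurewiczFibration {E B : Type u} [TopologicalSpace E] [TopologicalSpace B]
    (p : C(E, B)) : Prop :=
  ∀ (Z : Type u) [TopologicalSpace Z] (h₀ : C(Z, E)) (H : C(Z × I, B)),
    (∀ z, H (z, 0) = p (h₀ z)) →
    ∃ G : C(Z × I, E), (∀ zt : Z × I, p (G zt) = H zt) ∧ ∀ z, G (z, 0) = h₀ z

lemma const_homotopic' {X Y : Type*} [TopologicalSpace X] [TopologicalSpace Y]
    {c d : Y} (p : Path c d) :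
    (ContinuousMap.const X c).Homotopic (ContinuousMap.const X d) :=
  ⟨{ toContinuousMap := ⟨fun q => p q.1, p.continuous.comp continuous_fst⟩
     map_zero_left := fun _ => p.source
     map_one_left := fun _ => p.target }⟩

lemma fiber_retract' {E B : Type u} [TopologicalSpace E] [TopologicalSpace B]
    (π : C(E, B)) (hπ : IsHurewiczFibration π) (b₀ : B) [PathConnectedSpace B]
    (U : Set B) (hnull : (⟨Subtype.val, continuous_subtype_val⟩ : C(U, B)).Nullhomotopic) :
    ∃ r : C(↥(π ⁻¹' U), ↥(π ⁻¹' {b₀})),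
      ((⟨Subtype.val, continuous_subtype_val⟩ : C(↥(π ⁻¹' {b₀}), E)).comp r).Homotopic
        ⟨Subtype.val, continuous_subtype_val⟩ := by
  obtain ⟨c, hc⟩ := hnull
  obtain ⟨H⟩ := hc.trans (const_homotopic' (PathConnectedSpace.somePath c b₀))
  have hcont : Continuous fun wt : ↥(π ⁻¹' U) × I => ((⟨π wt.1.1, wt.1.2⟩ : U)) :=
    Continuous.subtype_mk ((π.continuous.comp continuous_subtype_val).comp continuous_fst) _
  let Hmap : C(↥(π ⁻¹' U) × I, B) :=
    ⟨fun wt => H (wt.2, ⟨π wt.1.1, wt.1.2⟩),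
      H.continuous.comp (continuous_snd.prodMk hcont)⟩
  obtain ⟨G, hG1, hG0⟩ := hπ ↥(π ⁻¹' U) ⟨Subtype.val, continuous_subtype_val⟩ Hmap
    (fun w => by simpa [Hmap] using (H.map_zero_left ⟨π w.1, w.2⟩))
  have hmem : ∀ w : ↥(π ⁻¹' U), G (w, 1) ∈ π ⁻¹' {b₀} := by
    intro w
    have h1 := hG1 (w, 1)
    simp only [Hmap, ContinuousMap.coe_mk] at h1
    have h2 : H (1, (⟨π ↑w, w.2⟩ : U)) = b₀ := H.map_one_left ⟨π w.1, w.2⟩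
    simp only [mem_preimage, mem_singleton_iff]
    rw [h1]; exact h2
  refine ⟨⟨fun w => ⟨G (w, 1), hmem w⟩,
      (G.continuous.comp (continuous_id.prodMk continuous_const)).subtype_mk _⟩, ?_⟩
  exact ContinuousMap.Homotopic.symm (Nonempty.intro
    { toContinuousMap := ⟨fun tw => G (tw.2, tw.1),
        G.continuous.comp (continuous_snd.prodMk continuous_fst)⟩
      map_zero_left := fun w => hG0 w
      map_one_left := fun w => rfl })

lemma main_cover' {E B A C : Type u} [TopologicalSpace E] [TopologicalSpace B]
    [TopologicalSpace A] [TopologicalSpace C]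
    (π : C(E, B)) (hπ : IsHurewiczFibration π) (b₀ : B) [PathConnectedSpace B]
    (f : C(A, ↑(π ⁻¹' {b₀}))) (g : C(C, E)) (φ : C(A, C))
    (hcomm : ∀ a, g (φ a) = ↑(f a)) {n m : ℕ}
    (h1 : NullCover B n) (h2 : CoveredBySections f m) :
    CoveredBySections g (n * m + n + m) := by
  obtain ⟨U, hUo, hUc, hUn⟩ := h1
  obtain ⟨V, hVo, hVc, hVs⟩ := h2
  choose r hr using fun i => fiber_retract' π hπ b₀ (U i) (hUn i)
  choose s hs using hVs
  -- the combined cover, indexed by pairs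
  let T : Fin (n + 1) × Fin (m + 1) → Set E :=
    fun p => Subtype.val '' ((r p.1) ⁻¹' (V p.2))
  have hTo : ∀ p, IsOpen (T p) := by
    intro p
    exact ((hUo p.1).preimage π.continuous).isOpenMap_subtype_val _
      ((hVo p.2).preimage (r p.1).continuous)
  have hTc : ∀ x : E, ∃ p, x ∈ T p := by
    intro x
    have hx : π x ∈ ⋃ i, U i := by rw [hUc]; trivial
    obtain ⟨i, hi⟩ := mem_iUnion.1 hx
    have hy : r i ⟨x, hi⟩ ∈ ⋃ j, V j := by rw [hVc]; trivial
    obtain ⟨j, hj⟩ := mem_iUnion.1 hy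
    exact ⟨(i, j), ⟨⟨x, hi⟩, hj, rfl⟩⟩
  have hTs : ∀ p, ∃ sec : C(T p, C),
      (g.comp sec).Homotopic ⟨Subtype.val, continuous_subtype_val⟩ := by
    rintro ⟨i, j⟩
    have hsub : T (i, j) ⊆ π ⁻¹' (U i) := Subtype.coe_image_subset _ _
    let ρ : C(↥(T (i, j)), ↥(π ⁻¹' (U i))) :=
      ⟨fun x => ⟨x.1, hsub x.2⟩, continuous_subtype_val.subtype_mk _⟩
    have hρV : ∀ x : ↥(T (i, j)), r i (ρ x) ∈ V j := by
      rintro ⟨x, w, hw, hwx⟩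
      have : w = ρ ⟨x, w, hw, hwx⟩ := Subtype.ext hwx
      rwa [this] at hw
    let ρ' : C(↥(T (i, j)), ↥(V j)) :=
      ⟨fun x => ⟨r i (ρ x), hρV x⟩, ((r i).continuous.comp ρ.continuous).subtype_mk _⟩
    refine ⟨φ.comp ((s j).comp ρ'), ?_⟩
    have e1 : g.comp (φ.comp ((s j).comp ρ')) =
        ((⟨Subtype.val, continuous_subtype_val⟩ : C(↥(π ⁻¹' {b₀}), E)).comp
          (f.comp (s j))).comp ρ' := by
      ext x; exact hcomm _
    have h2' : (((⟨Subtype.val, continuous_subtype_val⟩ : C(↥(π ⁻¹' {b₀}), E)).comp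
        (f.comp (s j))).comp ρ').Homotopic
        (((⟨Subtype.val, continuous_subtype_val⟩ : C(↥(π ⁻¹' {b₀}), E)).comp
          (⟨Subtype.val, continuous_subtype_val⟩ : C(↥(V j), ↥(π ⁻¹' {b₀})))).comp ρ') :=
      Homotopic.comp ((Homotopic.refl _).comp (hs j)) (Homotopic.refl ρ')
    have e2 : ((⟨Subtype.val, continuous_subtype_val⟩ : C(↥(π ⁻¹' {b₀}), E)).comp
        (⟨Subtype.val, continuous_subtype_val⟩ : C(↥(V j), ↥(π ⁻¹' {b₀})))).comp ρ' =
        ((⟨Subtype.val, continuous_subtype_val⟩ : C(↥(π ⁻¹' {b₀}), E)).comp (r i)).comp ρ := by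
      ext x; rfl
    have h3 : (((⟨Subtype.val, continuous_subtype_val⟩ : C(↥(π ⁻¹' {b₀}), E)).comp
        (r i)).comp ρ).Homotopic
        ((⟨Subtype.val, continuous_subtype_val⟩ : C(↥(π ⁻¹' (U i)), E)).comp ρ) :=
      (hr i).comp (Homotopic.refl ρ)
    have e3 : (⟨Subtype.val, continuous_subtype_val⟩ : C(↥(π ⁻¹' (U i)), E)).comp ρ =
        (⟨Subtype.val, continuous_subtype_val⟩ : C(↥(T (i, j)), E)) := by
      ext x; rfl
    rw [e1]
    exact (h2'.trans (e2 ▸ h3)).trans (e3 ▸ Homotopic.refl _)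
  -- reindex
  have hcard : (n + 1) * (m + 1) = n * m + n + m + 1 := by ring
  let e : Fin (n * m + n + m + 1) ≃ Fin (n + 1) × Fin (m + 1) :=
    (finCongr hcard.symm).trans finProdFinEquiv.symm
  refine ⟨fun k => T (e k), fun k => hTo _, ?_, fun k => hTs _⟩
  ext x
  simp only [mem_iUnion, mem_univ, iff_true]
  obtain ⟨p, hp⟩ := hTc x
  exact ⟨e.symm p, by simpa using hp⟩

/-- Sectional category over a fibration: given a fibration `π : E → B` over a
well-pointed path-connected base, with fibre inclusion `ι : F → E` over `b₀`, and a
commutative square `ι ∘ f = g ∘ φ` with `f : A → F`, `g : C → E`, one has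
`secat(g) + 1 ≤ (cat(B) + 1)(secat(f) + 1)`. -/
theorem secat_fibration {E B A C : Type u} [TopologicalSpace E] [TopologicalSpace B]
    [TopologicalSpace A] [TopologicalSpace C]
    (π : C(E, B)) (hπ : IsHurewiczFibration π) (b₀ : B)
    [PathConnectedSpace B]
    (hwp : IsCofibration (ContinuousMap.const PUnit b₀))
    (f : C(A, ↑(π ⁻¹' {b₀}))) (g : C(C, E)) (φ : C(A, C))
    (hf : IsCofibration f) (hg : IsCofibration g)
    (hcomm : ∀ a, g (φ a) = ↑(f a)) :
    secat g + 1 ≤ (LScat B + 1) * (secat f + 1) := by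

  have key : ∀ n ∈ {n : ℕ | NullCover B n}, ∀ m ∈ {n : ℕ | CoveredBySections f n},
      n * m + n + m ∈ {n : ℕ | CoveredBySections g n} :=
    fun n hn m hm => main_cover' π hπ b₀ f g φ hcomm hn hm
  unfold secat LScat
  set S1 := {n : ℕ | NullCover B n}
  set S2 := {n : ℕ | CoveredBySections f n}
  set S3 := {n : ℕ | CoveredBySections g n}
  by_cases h1 : S1.Nonempty
  · by_cases h2 : S2.Nonempty
    · set n₀ := sInf S1 with hn₀def
      set m₀ := sInf S2 with hm₀def
      have hn₀ : n₀ ∈ S1 := Nat.sInf_mem h1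
      have hm₀ : m₀ ∈ S2 := Nat.sInf_mem h2
      have hL1 : (n₀ : ℕ∞) ≤ sInf ((fun n : ℕ => (n : ℕ∞)) '' S1) := by
        refine le_sInf ?_
        rintro x ⟨k, hk, rfl⟩
        simpa using (Nat.cast_le (α := ℕ∞)).2 (Nat.sInf_le hk)
      have hL2 : (m₀ : ℕ∞) ≤ sInf ((fun n : ℕ => (n : ℕ∞)) '' S2) := by
        refine le_sInf ?_
        rintro x ⟨k, hk, rfl⟩
        simpa using (Nat.cast_le (α := ℕ∞)).2 (Nat.sInf_le hk)
      have hsec : sInf ((fun n : ℕ => (n : ℕ∞)) '' S3) ≤ ((n₀ * m₀ + n₀ + m₀ : ℕ) : ℕ∞) :=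
        sInf_le ⟨_, key _ hn₀ _ hm₀, rfl⟩
      calc sInf ((fun n : ℕ => (n : ℕ∞)) '' S3) + 1
          ≤ ((n₀ * m₀ + n₀ + m₀ : ℕ) : ℕ∞) + 1 := add_le_add_left hsec 1
        _ = ((n₀ : ℕ∞) + 1) * ((m₀ : ℕ∞) + 1) := by push_cast; ring
        _ ≤ _ := mul_le_mul' (add_le_add_left hL1 1) (add_le_add_left hL2 1)
    · have h2' : S2 = ∅ := not_nonempty_iff_eq_empty.1 h2
      rw [h2']
      simp only [image_empty, sInf_empty]
      rw [top_add, ENat.mul_top]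
      · exact le_top
      · exact fun hc => by simp at hc
  · have h1' : S1 = ∅ := not_nonempty_iff_eq_empty.1 h1
    rw [h1']
    simp only [image_empty, sInf_empty]
    rw [top_add, ENat.top_mul]
    · exact le_top
    · exact fun hc => by simp at hc
end
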